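/- Let p be an odd prime, let t ∈ F_p with t ≠ 0, 1, and suppose the elliptic curve E_t: y^2 = x^3 - 2(t-2)x^2 + t^2 x over F_p has full 2-torsion over F_p. If T is a point of order two on E_t(F_p) with T ≠ (0,0), then the x-coordinate of T is a square in F_p if and only if p ≡ 1 (mod 4). -/

import Mathlib

/-- If `E_t : y² = x³ - 2(t-2)x² + t²x` has full 2-torsion over `F_p`, i.e. the quadratic
`x² + (4-2t)x + t² = 0` has a root `x₀ ∈ F_p` (the `x`-coordinate of a 2-torsion point
`T ≠ (0,0)`), then `x₀` is a square iff `p ≡ 1 (mod 4)`. -/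
theorem two_torsion_x_square (p : ℕ) (hp : p.Prime) (hodd : p % 2 = 1)
    (t : ZMod p) (ht0 : t ≠ 0) (ht1 : t ≠ 1)
    (x₀ : ZMod p) (hx₀ : x₀ ≠ 0)
    (hroot : x₀ ^ 2 + (4 - 2 * t) * x₀ + t ^ 2 = 0) :
    IsSquare x₀ ↔ p % 4 = 1 := by
  haveI : Fact p.Prime := ⟨hp⟩
  have h2 : (2 : ZMod p) ≠ 0 := by
    intro h
    have hd : p ∣ 2 := (ZMod.natCast_eq_zero_iff 2 p).mp (by exact_mod_cast h)
    have := (Nat.prime_dvd_prime_iff_eq hp Nat.prime_two).mp hd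
    omega
  set u : ZMod p := (x₀ - t) * 2⁻¹ with hu
  have hux : x₀ = -u ^ 2 := by
    have h2i : (2 : ZMod p) * 2⁻¹ = 1 := mul_inv_cancel₀ h2
    have h4 : ((x₀ - t)) ^ 2 = -(4 * x₀) := by linear_combination hroot
    have : u ^ 2 = -x₀ := by
      calc u ^ 2 = (x₀ - t) ^ 2 * 2⁻¹ ^ 2 := by rw [hu]; ring
        _ = (-(4 * x₀)) * 2⁻¹ ^ 2 := by rw [h4]
        _ = -x₀ * (2 * 2⁻¹) ^ 2 := by ring
        _ = -x₀ := by rw [h2i]; ring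
    rw [this, neg_neg]
  have hune : u ≠ 0 := by
    intro h
    apply hx₀
    rw [hux, h]; ring
  have key : IsSquare x₀ ↔ IsSquare (-1 : ZMod p) := by
    constructor
    · rintro ⟨r, hr⟩
      refine ⟨r * u⁻¹, ?_⟩
      rw [show r * u⁻¹ * (r * u⁻¹) = (r * r) * (u⁻¹ * u⁻¹) from by ring, ← hr, hux]
      field_simp
    · rintro ⟨i, hi⟩
      exact ⟨i * u, by rw [hux]; linear_combination (u * u) * hi⟩
  rw [key, ZMod.exists_sq_eq_neg_one_iff]
  have := Nat.mod_mod_of_dvd p (by norm_num : 2 ∣ 4)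
  omega
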